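/- If n and d are positive integers with d | n and n/d ≡ 4 (mod 8), then the transition matrix of the integral circulant graph ICG_n({d, 2d, 4d}) at time π/2 is the identity matrix. -/

import Mathlib

open Matrix Complex

/-- Adjacency matrix of the Cayley graph `Cay(Γ, S)`: `a, b` adjacent iff `a - b ∈ S`. -/
noncomputable def cayAdj {G : Type*} [AddGroup G] (S : Set G) : Matrix G G ℂ :=
  Matrix.of fun a b => S.indicator (fun _ => (1 : ℂ)) (a - b)

/-- Adjacency matrix of the integral circulant graph `ICG_n(D)`: the Cayley graph over `ℤ_n`
with connection set `∪_{d ∈ D} S_{ℤ_n}(d)`, where `S_{ℤ_n}(d) = {x : gcd(x, n) = d}`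
(with the convention `gcd(0, n) = n`; in particular `S_{ℤ_n}(n) = {0}` gives a loop at every
vertex). -/
noncomputable def icgAdj (n : ℕ) (D : Set ℕ) : Matrix (ZMod n) (ZMod n) ℂ :=
  cayAdj {x : ZMod n | Nat.gcd x.val n ∈ D}

/-- Transition matrix `H(t) = exp(i t A)` of a graph with adjacency matrix `A`. -/
noncomputable def transitionM {V : Type*} [Fintype V] [DecidableEq V]
    (A : Matrix V V ℂ) (t : ℝ) : Matrix V V ℂ :=
  NormedSpace.exp ((Complex.I * (t : ℂ)) • A)

section AuxNT
open Finset

private lemma moebius_sum' (k : ℕ) :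
    ∑ δ ∈ k.divisors, (ArithmeticFunction.moebius δ) = if k = 1 then 1 else 0 := by
  rw [← ArithmeticFunction.coe_mul_zeta_apply, ArithmeticFunction.moebius_mul_coe_zeta,
    ArithmeticFunction.one_apply]

private lemma geom_sum_root (z : ℂ) (N : ℕ) (hz : z ^ N = 1) :
    ∑ s ∈ range N, z ^ s = if z = 1 then (N : ℂ) else 0 := by
  split_ifs with h
  · simp [h]
  · rw [geom_sum_eq h, hz, sub_self, zero_div]

private lemma sum_dvd_filter (u δ : ℕ) (hδu : δ ∣ u) (hδ0 : 0 < δ) (z : ℂ) :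
    ∑ r ∈ (range u).filter (fun r => δ ∣ r), z ^ r = ∑ s ∈ range (u / δ), (z ^ δ) ^ s := by
  refine Finset.sum_nbij' (fun r => r / δ) (fun s => δ * s) ?_ ?_ ?_ ?_ ?_
  · intro r hr
    simp only [mem_filter, mem_range] at hr ⊢
    obtain ⟨hru, hδr⟩ := hr
    obtain ⟨a, rfl⟩ := hδr
    obtain ⟨b, rfl⟩ := hδu
    rw [Nat.mul_div_cancel_left _ hδ0, Nat.mul_div_cancel_left _ hδ0]
    exact lt_of_mul_lt_mul_left hru (Nat.zero_le δ)
  · intro s hs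
    simp only [mem_range] at hs
    simp only [mem_filter, mem_range]
    refine ⟨?_, Dvd.intro s rfl⟩
    calc δ * s < δ * (u / δ) := by exact (Nat.mul_lt_mul_left hδ0).mpr hs
    _ = u := Nat.mul_div_cancel' hδu
  · intro r hr
    simp only [mem_filter, mem_range] at hr
    exact Nat.mul_div_cancel' hr.2
  · intro s _
    exact Nat.mul_div_cancel_left _ hδ0
  · intro r hr
    simp only [mem_filter, mem_range] at hr
    rw [← pow_mul, Nat.mul_div_cancel' hr.2]

private lemma rama_int (u : ℕ) (hu : 0 < u) (z : ℂ) (hz : z ^ u = 1) :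
    ∃ c : ℤ, ∑ r ∈ (range u).filter (fun r => Nat.gcd r u = 1), z ^ r = (c : ℂ) := by
  classical
  refine ⟨∑ δ ∈ u.divisors, ArithmeticFunction.moebius δ *
      (if z ^ δ = 1 then ((u / δ : ℕ) : ℤ) else 0), ?_⟩
  rw [Finset.sum_filter]
  have step1 : ∀ r ∈ range u, (if Nat.gcd r u = 1 then z ^ r else 0) =
      ∑ δ ∈ u.divisors, (if δ ∣ r then (ArithmeticFunction.moebius δ : ℂ) * z ^ r else 0) := by
    intro r _
    have hdiveq : (Nat.gcd r u).divisors = u.divisors.filter (fun δ => δ ∣ r) := by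
      ext δ
      simp only [Nat.mem_divisors, mem_filter]
      constructor
      · rintro ⟨hδ, -⟩
        exact ⟨⟨(Nat.dvd_gcd_iff.mp hδ).2, hu.ne'⟩, (Nat.dvd_gcd_iff.mp hδ).1⟩
      · rintro ⟨⟨hδu, -⟩, hδr⟩
        exact ⟨Nat.dvd_gcd hδr hδu, Nat.gcd_ne_zero_right hu.ne'⟩
    have hZ : (if Nat.gcd r u = 1 then (1:ℤ) else 0) =
        ∑ δ ∈ u.divisors.filter (fun δ => δ ∣ r), ArithmeticFunction.moebius δ := by
      rw [← hdiveq, moebius_sum']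
    have hmain : ((if Nat.gcd r u = 1 then (1:ℤ) else 0) : ℂ) =
        ∑ δ ∈ u.divisors.filter (fun δ => δ ∣ r), (ArithmeticFunction.moebius δ : ℂ) := by
      rw [← hdiveq, ← Int.cast_sum, moebius_sum']
      split_ifs <;> simp
    rw [← Finset.sum_filter]
    calc (if Nat.gcd r u = 1 then z ^ r else 0)
        = ((if Nat.gcd r u = 1 then (1:ℤ) else 0) : ℂ) * z ^ r := by split_ifs <;> simp
      _ = (∑ δ ∈ u.divisors.filter (fun δ => δ ∣ r), (ArithmeticFunction.moebius δ : ℂ)) * z ^ r := by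
          rw [hmain]
      _ = _ := by rw [Finset.sum_mul]
  rw [Finset.sum_congr rfl step1, Finset.sum_comm, Int.cast_sum]
  refine Finset.sum_congr rfl fun δ hδ => ?_
  obtain ⟨hδu, hu0'⟩ := Nat.mem_divisors.mp hδ
  have hδ0 : 0 < δ := Nat.pos_of_dvd_of_pos hδu hu
  have : ∑ r ∈ range u, (if δ ∣ r then (ArithmeticFunction.moebius δ : ℂ) * z ^ r else 0) =
      (ArithmeticFunction.moebius δ : ℂ) * ∑ r ∈ (range u).filter (fun r => δ ∣ r), z ^ r := by
    rw [Finset.mul_sum, ← Finset.sum_filter]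
  rw [this, sum_dvd_filter u δ hδu hδ0 z,
    geom_sum_root _ _ (by rw [← pow_mul, Nat.mul_div_cancel' hδu, hz]), Int.cast_mul]
  congr 1
  split_ifs
  · norm_cast
  · simp

private lemma gcd124 (u b : ℕ) (hu0 : 0 < u) (huodd : Odd u) :
    (Nat.gcd b (4 * u) = 1 ∨ Nat.gcd b (4 * u) = 2 ∨ Nat.gcd b (4 * u) = 4) ↔
      Nat.gcd b u = 1 := by
  have hc4u : Nat.Coprime 4 u := by
    have h2 : Nat.Coprime 2 u := Nat.coprime_two_left.mpr huodd
    have : Nat.Coprime (2 ^ 2) u := Nat.Coprime.pow_left 2 h2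
    simpa using this
  constructor
  · intro h
    have hg : Nat.gcd b u ∣ Nat.gcd b (4 * u) :=
      Nat.dvd_gcd (Nat.gcd_dvd_left _ _) ((Nat.gcd_dvd_right b u).trans (dvd_mul_left u 4))
    have hg4 : Nat.gcd b u ∣ 4 := by
      rcases h with h | h | h <;> rw [h] at hg
      · exact hg.trans (by norm_num)
      · exact hg.trans (by norm_num)
      · exact hg
    have hgu : Nat.gcd b u ∣ u := Nat.gcd_dvd_right b u
    have : Nat.gcd b u ∣ Nat.gcd 4 u := Nat.dvd_gcd hg4 hgu
    rwa [Nat.coprime_iff_gcd_eq_one.mp hc4u, Nat.dvd_one] at this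
  · intro h
    set g := Nat.gcd b (4 * u) with hgdef
    have hgpos : 0 < g := Nat.gcd_pos_of_pos_right _ (by positivity)
    have hcopr : Nat.Coprime g u := by
      have : Nat.gcd g u ∣ Nat.gcd b u :=
        Nat.dvd_gcd ((Nat.gcd_dvd_left g u).trans (Nat.gcd_dvd_left _ _)) (Nat.gcd_dvd_right g u)
      rw [h, Nat.dvd_one] at this
      exact this
    have hg4 : g ∣ 4 := hcopr.dvd_of_dvd_mul_right (Nat.gcd_dvd_right b (4 * u))
    have hle : g ≤ 4 := Nat.le_of_dvd (by norm_num) hg4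
    interval_cases g <;> first | tauto | (exact absurd hg4 (by norm_num))

private lemma block_sum (u : ℕ) (w₁ : ℂ) (k : ℕ) :
    ∑ b ∈ range (k * u), (if Nat.gcd b u = 1 then w₁ ^ b else 0) =
      (∑ i ∈ range k, (w₁ ^ u) ^ i) *
        ∑ r ∈ range u, (if Nat.gcd r u = 1 then w₁ ^ r else 0) := by
  induction k with
  | zero => simp
  | succ k ih =>
    rw [Nat.succ_mul, Finset.sum_range_add, ih, Finset.sum_range_succ, add_mul]
    congr 1
    rw [Finset.mul_sum]
    refine Finset.sum_congr rfl fun x _ => ?_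
    have hgcd : Nat.gcd (k * u + x) u = Nat.gcd x u := by
      rw [add_comm, mul_comm, Nat.gcd_add_mul_left_left]
    simp only [hgcd]
    split_ifs
    · rw [pow_add]; ring
    · ring

private lemma num_key (d u n : ℕ) (hd0 : 0 < d) (hu0 : 0 < u) (huodd : Odd u)
    (hn : n = 4 * u * d) (z : ℂ) (hz : z ^ n = 1) :
    ∃ c : ℤ, ∑ a ∈ Finset.range n,
        (if (Nat.gcd a n = d ∨ Nat.gcd a n = 2 * d ∨ Nat.gcd a n = 4 * d) then z ^ a else 0) =
      4 * (c : ℂ) := by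
  classical
  set w₁ : ℂ := z ^ d with hw₁
  -- step 1 : reindex a = d * b
  have hstep1 : ∑ a ∈ Finset.range n,
      (if (Nat.gcd a n = d ∨ Nat.gcd a n = 2 * d ∨ Nat.gcd a n = 4 * d) then z ^ a else 0) =
      ∑ b ∈ range (4 * u), (if Nat.gcd b u = 1 then w₁ ^ b else 0) := by
    rw [← Finset.sum_filter, ← Finset.sum_filter]
    refine Finset.sum_nbij' (fun a => a / d) (fun b => d * b) ?_ ?_ ?_ ?_ ?_
    · intro a ha
      simp only [mem_filter, mem_range] at ha ⊢
      obtain ⟨han, hP⟩ := ha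
      have hda : d ∣ a := by
        have h1 : d ∣ Nat.gcd a n := by
          rcases hP with h | h | h <;> rw [h] <;> exact ⟨_, mul_comm _ _⟩
        exact h1.trans (Nat.gcd_dvd_left a n)
      obtain ⟨b, rfl⟩ := hda
      rw [Nat.mul_div_cancel_left _ hd0]
      have hgcd : Nat.gcd (d * b) n = d * Nat.gcd b (4 * u) := by
        rw [hn, mul_comm (4 * u) d, Nat.gcd_mul_left]
      rw [hgcd] at hP
      constructor
      · rw [hn, mul_comm (4 * u) d] at han
        exact lt_of_mul_lt_mul_left han (Nat.zero_le d)
      · rw [← gcd124 u b hu0 huodd]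
        rcases hP with h | h | h
        · left; exact Nat.eq_of_mul_eq_mul_left hd0 (by omega)
        · right; left; exact Nat.eq_of_mul_eq_mul_left hd0 (by omega)
        · right; right; exact Nat.eq_of_mul_eq_mul_left hd0 (by omega)
    · intro b hb
      simp only [mem_filter, mem_range] at hb ⊢
      obtain ⟨hb4u, hgb⟩ := hb
      have hgcd : Nat.gcd (d * b) n = d * Nat.gcd b (4 * u) := by
        rw [hn, mul_comm (4 * u) d, Nat.gcd_mul_left]
      constructor
      · rw [hn, mul_comm (4 * u) d]
        exact (Nat.mul_lt_mul_left hd0).mpr hb4u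
      · rw [hgcd]
        rcases (gcd124 u b hu0 huodd).mpr hgb with h | h | h <;> rw [h]
        · left; exact mul_one d
        · right; left; exact mul_comm d 2
        · right; right; exact mul_comm d 4
    · intro a ha
      simp only [mem_filter, mem_range] at ha
      have hda : d ∣ a := by
        have h1 : d ∣ Nat.gcd a n := by
          rcases ha.2 with h | h | h <;> rw [h] <;> exact ⟨_, mul_comm _ _⟩
        exact h1.trans (Nat.gcd_dvd_left a n)
      exact Nat.mul_div_cancel' hda
    · intro b _
      exact Nat.mul_div_cancel_left _ hd0
    · intro a ha
      simp only [mem_filter, mem_range] at ha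
      have hda : d ∣ a := by
        have h1 : d ∣ Nat.gcd a n := by
          rcases ha.2 with h | h | h <;> rw [h] <;> exact ⟨_, mul_comm _ _⟩
        exact h1.trans (Nat.gcd_dvd_left a n)
      rw [hw₁, ← pow_mul, Nat.mul_div_cancel' hda]
  -- step 2 : block decomposition
  rw [hstep1, block_sum u w₁ 4]
  set w : ℂ := w₁ ^ u with hwdef
  have hw4 : w ^ 4 = 1 := by
    rw [hwdef, hw₁, ← pow_mul, ← pow_mul, show d * (u * 4) = n from by rw [hn]; ring, hz]
  by_cases hw1 : w = 1
  · obtain ⟨c, hc⟩ := rama_int u hu0 w₁ (by rw [← hwdef, hw1])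
    refine ⟨c, ?_⟩
    rw [Finset.sum_filter] at hc
    rw [hc, hw1]
    norm_num
  · refine ⟨0, ?_⟩
    have : ∑ i ∈ range 4, w ^ i = 0 := by
      rw [geom_sum_root w 4 hw4, if_neg hw1]
    rw [this, zero_mul]
    simp

end AuxNT

/-- If `n` and `d` are positive integers with `d ∣ n` and
`n / d ≡ 4 (mod 8)`, then the transition matrix of the integral circulant graph
`ICG_n({d, 2d, 4d})` at time `π/2` is the identity matrix. -/
theorem icg_periodic_of_mod_eight_eq_four (n d : ℕ) [NeZero n] (hd0 : 0 < d) (hdn : d ∣ n)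
    (h8 : n / d % 8 = 4) :
    transitionM (icgAdj n {d, 2 * d, 4 * d}) (Real.pi / 2) = 1 := by
  classical
  have hn0 : n ≠ 0 := NeZero.ne n
  -- arithmetic setup
  set m := n / d with hm
  have hnm : n = d * m := (Nat.mul_div_cancel' hdn).symm
  set u := m / 4 with hu
  have hm8 : m % 8 = 4 := h8
  have hm4 : m = 4 * u := by omega
  have huodd : Odd u := ⟨m / 8, by omega⟩
  have hu0 : 0 < u := by omega
  have hnud : n = 4 * u * d := by rw [hnm, hm4]; ring
  -- characters and Fourier matrix
  set ψ : AddChar (ZMod n) ℂ := ZMod.stdAddChar with hψ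
  set F : Matrix (ZMod n) (ZMod n) ℂ := Matrix.of fun x y => ψ (x * y) with hF
  set G : Matrix (ZMod n) (ZMod n) ℂ := Matrix.of fun x y => ψ (-(x * y)) with hG
  set A : Matrix (ZMod n) (ZMod n) ℂ := icgAdj n {d, 2 * d, 4 * d} with hA
  have hAatpply : ∀ x y : ZMod n, A x y =
      if (Nat.gcd (x - y).val n = d ∨ Nat.gcd (x - y).val n = 2 * d ∨
          Nat.gcd (x - y).val n = 4 * d) then 1 else 0 := by
    intro x y
    simp only [hA, icgAdj, cayAdj, Matrix.of_apply, Set.indicator_apply, Set.mem_setOf_eq,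
      Set.mem_insert_iff, Set.mem_singleton_iff]
  -- orthogonality
  have hFG : F * G = (n : ℂ) • 1 := by
    ext a b
    simp only [hF, hG, Matrix.mul_apply, Matrix.of_apply, Matrix.smul_apply, Matrix.one_apply]
    have hterm : ∀ y : ZMod n, ψ (a * y) * ψ (-(y * b)) = ψ (y * (a - b)) := by
      intro y
      rw [← AddChar.map_add_eq_mul]
      congr 1
      ring
    rw [Finset.sum_congr rfl fun y _ => hterm y]
    rw [AddChar.sum_mulShift (a - b) (ZMod.isPrimitive_stdAddChar n), ZMod.card]
    by_cases hab : a = b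
    · simp [hab]
    · rw [if_neg (sub_ne_zero.mpr hab), if_neg hab]
      simp
  have hGF : G * F = (n : ℂ) • 1 := by
    ext a b
    simp only [hF, hG, Matrix.mul_apply, Matrix.of_apply, Matrix.smul_apply, Matrix.one_apply]
    have hterm : ∀ y : ZMod n, ψ (-(a * y)) * ψ (y * b) = ψ (y * (b - a)) := by
      intro y
      rw [← AddChar.map_add_eq_mul]
      congr 1
      ring
    rw [Finset.sum_congr rfl fun y _ => hterm y]
    rw [AddChar.sum_mulShift (b - a) (ZMod.isPrimitive_stdAddChar n), ZMod.card]
    by_cases hab : a = b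
    · simp [hab]
    · rw [if_neg (sub_ne_zero.mpr (Ne.symm hab)), if_neg hab]
      simp
  have hnC : (n : ℂ) ≠ 0 := Nat.cast_ne_zero.mpr hn0
  set U : (Matrix (ZMod n) (ZMod n) ℂ)ˣ :=
    ⟨F, (n : ℂ)⁻¹ • G,
      by rw [Matrix.mul_smul, hFG, smul_smul, inv_mul_cancel₀ hnC, one_smul],
      by rw [Matrix.smul_mul, hGF, smul_smul, inv_mul_cancel₀ hnC, one_smul]⟩ with hU
  -- eigenvalues
  set lam : ZMod n → ℂ := fun j => ∑ x ∈ Finset.univ.filter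
      (fun x : ZMod n => Nat.gcd x.val n = d ∨ Nat.gcd x.val n = 2 * d ∨
        Nat.gcd x.val n = 4 * d), ψ (x * (-j)) with hlam
  have hAF : A * F = F * Matrix.diagonal lam := by
    ext x j
    rw [Matrix.mul_diagonal, Matrix.mul_apply]
    have hre : ∀ y : ZMod n, A x y * F y j = A x (x - (x - y)) * F (x - (x - y)) j := by
      intro y; rw [sub_sub_cancel]
    calc ∑ y : ZMod n, A x y * F y j
        = ∑ s : ZMod n, A x (x - s) * F (x - s) j :=
          (Fintype.sum_equiv (Equiv.subLeft x) _ _ (fun y => by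
            simp only [Equiv.subLeft_apply, sub_sub_cancel])).symm
      _ = ∑ s : ZMod n, (if (Nat.gcd s.val n = d ∨ Nat.gcd s.val n = 2 * d ∨
            Nat.gcd s.val n = 4 * d) then ψ ((x - s) * j) else 0) := by
          refine Finset.sum_congr rfl fun s _ => ?_
          rw [hAatpply, sub_sub_cancel]
          simp only [hF, Matrix.of_apply]
          split_ifs <;> simp
      _ = ∑ s ∈ Finset.univ.filter (fun s : ZMod n => Nat.gcd s.val n = d ∨
            Nat.gcd s.val n = 2 * d ∨ Nat.gcd s.val n = 4 * d), ψ ((x - s) * j) := by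
          rw [Finset.sum_filter]
      _ = ∑ s ∈ Finset.univ.filter (fun s : ZMod n => Nat.gcd s.val n = d ∨
            Nat.gcd s.val n = 2 * d ∨ Nat.gcd s.val n = 4 * d), ψ (x * j) * ψ (s * (-j)) := by
          refine Finset.sum_congr rfl fun s _ => ?_
          rw [← AddChar.map_add_eq_mul]
          congr 1
          ring
      _ = F x j * lam j := by
          simp only [hlam, hF, Matrix.of_apply, Finset.mul_sum]
  -- eigenvalue divisibility
  have hkey : ∀ j : ZMod n, ∃ c : ℤ, lam j = 4 * (c : ℂ) := by
    intro j
    set z : ℂ := ψ (-j) with hz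
    have hzn : z ^ n = 1 := by
      rw [hz, ← AddChar.map_nsmul_eq_pow, nsmul_eq_mul, ZMod.natCast_self, zero_mul,
        AddChar.map_zero_eq_one]
    obtain ⟨c, hc⟩ := num_key d u n hd0 hu0 huodd hnud z hzn
    refine ⟨c, ?_⟩
    rw [← hc]
    simp only [hlam]
    rw [Finset.sum_filter]
    refine Finset.sum_nbij' (fun x : ZMod n => x.val) (fun a : ℕ => (a : ZMod n))
      ?_ ?_ ?_ ?_ ?_
    · intro x _
      exact Finset.mem_range.mpr (ZMod.val_lt x)
    · intro a _
      exact Finset.mem_univ _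
    · intro x _
      exact ZMod.natCast_rightInverse x
    · intro a ha
      exact ZMod.val_cast_of_lt (Finset.mem_range.mp ha)
    · intro x _
      have hx : ψ (x * (-j)) = z ^ x.val := by
        rw [hz, ← AddChar.map_nsmul_eq_pow, nsmul_eq_mul]
        congr 1
        rw [ZMod.natCast_rightInverse x]
      rw [hx]
  -- assemble
  have hUinv : (↑U⁻¹ : Matrix (ZMod n) (ZMod n) ℂ) = (n : ℂ)⁻¹ • G := rfl
  have hUcoe : (↑U : Matrix (ZMod n) (ZMod n) ℂ) = F := rfl
  have hAdecomp : A = (U : Matrix (ZMod n) (ZMod n) ℂ) * Matrix.diagonal lam *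
      ((U⁻¹ : (Matrix (ZMod n) (ZMod n) ℂ)ˣ) : Matrix (ZMod n) (ZMod n) ℂ) := by
    rw [hUinv, hUcoe]
    have h1 : F * ((n : ℂ)⁻¹ • G) = 1 := by
      rw [Matrix.mul_smul, hFG, smul_smul, inv_mul_cancel₀ hnC, one_smul]
    calc A = A * (F * ((n : ℂ)⁻¹ • G)) := by rw [h1, Matrix.mul_one]
      _ = (A * F) * ((n : ℂ)⁻¹ • G) := by rw [Matrix.mul_assoc]
      _ = F * Matrix.diagonal lam * ((n : ℂ)⁻¹ • G) := by rw [hAF]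
  rw [transitionM, hAdecomp]
  have hsmul : (Complex.I * ((Real.pi / 2 : ℝ) : ℂ)) •
      ((U : Matrix (ZMod n) (ZMod n) ℂ) * Matrix.diagonal lam *
        ((U⁻¹ : (Matrix (ZMod n) (ZMod n) ℂ)ˣ) : Matrix (ZMod n) (ZMod n) ℂ)) =
      (U : Matrix (ZMod n) (ZMod n) ℂ) *
        ((Complex.I * ((Real.pi / 2 : ℝ) : ℂ)) • Matrix.diagonal lam) *
        ((U⁻¹ : (Matrix (ZMod n) (ZMod n) ℂ)ˣ) : Matrix (ZMod n) (ZMod n) ℂ) := by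
    rw [Matrix.mul_smul, Matrix.smul_mul]
  rw [hsmul, Matrix.exp_units_conj U]
  have hdiag : (Complex.I * ((Real.pi / 2 : ℝ) : ℂ)) • Matrix.diagonal lam =
      Matrix.diagonal (fun j => (Complex.I * ((Real.pi / 2 : ℝ) : ℂ)) * lam j) := by
    rw [← Matrix.diagonal_smul]
    congr 1
  rw [hdiag, Matrix.exp_diagonal]
  have hone : (NormedSpace.exp fun j => Complex.I * ((Real.pi / 2 : ℝ) : ℂ) * lam j) =
      fun _ : ZMod n => (1 : ℂ) := by
    rw [Pi.exp_def]
    funext j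
    obtain ⟨c, hc⟩ := hkey j
    rw [hc, ← Complex.exp_eq_exp_ℂ]
    have : Complex.I * ((Real.pi / 2 : ℝ) : ℂ) * (4 * (c : ℂ)) = (c : ℂ) * (2 * Real.pi * Complex.I) := by
      push_cast
      ring
    rw [this, Complex.exp_int_mul_two_pi_mul_I]
  rw [hone, Matrix.diagonal_one, Matrix.mul_one, U.mul_inv]
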